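/- The φ-splice C₂ ▵_φ C₁ is a copula if and only if for every x₁, x₂ ∈ [0,1] with x₁ < x₂, at least one of the following three inequalities holds: (1) V_{x₁}^{x₂}(Γ̂) ≥ Γ̂(x₁) + Γ̂(x₂); (2) V_{x₁}^{x₂}(Γ̃) ≥ Γ̃(x₁) + Γ̃(x₂); (3) V_{x₁}^{x₂}(Γ̂) + V_{x₁}^{x₂}(Γ̃) ≥ (x₂ − x₁) + (φ(x₂) − φ(x₁)). -/

import Mathlib

open Set MeasureTheory

/-- `Γ̂(t) = t - Γ(t)`. -/
def Ghat (Γ : ℝ → ℝ) : ℝ → ℝ := fun t => t - Γ t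

/-- `Γ̃(t) = φ(t) - Γ(t)`. -/
def Gtil (φ Γ : ℝ → ℝ) : ℝ → ℝ := fun t => φ t - Γ t

/-- The (signed) total variation `V_a^b(f)` of `f` on `[a, b] ⊆ [0, 1]`, with
the conventions `V_b^a(f) = -V_a^b(f)` and `V_a^a(f) = 0`. -/
noncomputable def sV (f : ℝ → ℝ) (a b : ℝ) : ℝ := variationOnFromTo f (Set.Icc 0 1) a b

/-- `f₁(x, y) = x - (1/2) (V_{φ⁻¹(y)}^x(Γ̂) + Γ̂(x) + Γ̂(φ⁻¹(y)))`, where `ψ = φ⁻¹`. -/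
noncomputable def f1 (ψ Γ : ℝ → ℝ) (x y : ℝ) : ℝ :=
  x - (1/2) * (sV (Ghat Γ) (ψ y) x + Ghat Γ x + Ghat Γ (ψ y))

/-- `f₂(x, y) = y - (1/2) (V_x^{φ⁻¹(y)}(Γ̃) + Γ̃(x) + Γ̃(φ⁻¹(y)))`, where `ψ = φ⁻¹`. -/
noncomputable def f2 (φ ψ Γ : ℝ → ℝ) (x y : ℝ) : ℝ :=
  y - (1/2) * (sV (Gtil φ Γ) x (ψ y) + Gtil φ Γ x + Gtil φ Γ (ψ y))

/-- `C₁(x, y) = min {x, y, f₁(x, y)}`. -/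
noncomputable def C1 (ψ Γ : ℝ → ℝ) (x y : ℝ) : ℝ := min x (min y (f1 ψ Γ x y))

/-- `C₂(x, y) = min {x, y, f₂(x, y)}`. -/
noncomputable def C2 (φ ψ Γ : ℝ → ℝ) (x y : ℝ) : ℝ := min x (min y (f2 φ ψ Γ x y))

/-- The φ-splice `C₂ ▵_φ C₁`: equal to `C₁` when `y ≤ φ(x)`, to `C₂` when `y ≥ φ(x)`. -/
noncomputable def splice (φ ψ Γ : ℝ → ℝ) (x y : ℝ) : ℝ :=
  if y ≤ φ x then C1 ψ Γ x y else C2 φ ψ Γ x y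

/-- A copula on `[0,1]²`: boundary conditions and 2-increasingness. -/
def IsCopula (C : ℝ → ℝ → ℝ) : Prop :=
  (∀ x ∈ Set.Icc (0:ℝ) 1, ∀ y ∈ Set.Icc (0:ℝ) 1, C x y ∈ Set.Icc (0:ℝ) 1) ∧
  (∀ x ∈ Set.Icc (0:ℝ) 1, C x 0 = 0 ∧ C 0 x = 0 ∧ C x 1 = x ∧ C 1 x = x) ∧
  (∀ x₁ x₂ y₁ y₂ : ℝ, x₁ ∈ Set.Icc (0:ℝ) 1 → x₂ ∈ Set.Icc (0:ℝ) 1 →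
    y₁ ∈ Set.Icc (0:ℝ) 1 → y₂ ∈ Set.Icc (0:ℝ) 1 → x₁ ≤ x₂ → y₁ ≤ y₂ →
    0 ≤ C x₂ y₂ - C x₂ y₁ - C x₁ y₂ + C x₁ y₁)

/-- The greatest quasi-copula `A_Γ` with curvilinear section `Γ` (`ψ = φ⁻¹`). -/
noncomputable def AG (φ ψ Γ : ℝ → ℝ) (x y : ℝ) : ℝ :=
  if y ≤ φ x then min y (x - sSup (Ghat Γ '' Set.Icc (ψ y) x))
  else min x (y - sSup (Gtil φ Γ '' Set.Icc x (ψ y)))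

private lemma evar_le_bound {f w : ℝ → ℝ} {s : Set ℝ}
    (hb : ∀ x ∈ s, ∀ y ∈ s, x ≤ y → |f y - f x| ≤ w y - w x)
    {a b : ℝ} (ha : a ∈ s) (hb' : b ∈ s) (hab : a ≤ b) :
    eVariationOn f (s ∩ Set.Icc a b) ≤ ENNReal.ofReal (w b - w a) := by
  apply iSup_le
  rintro ⟨n, ⟨u, hu, us⟩⟩
  have key : ∀ x ∈ s ∩ Set.Icc a b, ∀ y ∈ s ∩ Set.Icc a b, x ≤ y →
      |f y - f x| ≤ w y - w x := fun x hx y hy hxy => hb x hx.1 y hy.1 hxy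
  calc ∑ i ∈ Finset.range n, edist (f (u (i+1))) (f (u i))
      ≤ ∑ i ∈ Finset.range n, ENNReal.ofReal (w (u (i+1)) - w (u i)) := by
        refine Finset.sum_le_sum fun i _ => ?_
        rw [edist_dist, Real.dist_eq]
        exact ENNReal.ofReal_le_ofReal (key _ (us i) _ (us (i+1)) (hu (Nat.le_succ i)))
    _ = ENNReal.ofReal (∑ i ∈ Finset.range n, (w (u (i+1)) - w (u i))) := by
        rw [ENNReal.ofReal_sum_of_nonneg]
        intro i _
        exact (abs_nonneg _).trans (key _ (us i) _ (us (i+1)) (hu (Nat.le_succ i)))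
    _ = ENNReal.ofReal (w (u n) - w (u 0)) := by
        rw [Finset.sum_range_sub (fun i => w (u i))]
    _ ≤ ENNReal.ofReal (w b - w a) := by
        apply ENNReal.ofReal_le_ofReal
        have h2 : |f b - f (u n)| ≤ w b - w (u n) := hb _ (us n).1 _ hb' (us n).2.2
        have h3 : |f (u 0) - f a| ≤ w (u 0) - w a := hb _ ha _ (us 0).1 (us 0).2.1
        have := (abs_nonneg (f b - f (u n))).trans h2
        have := (abs_nonneg (f (u 0) - f a)).trans h3
        linarith

private lemma sV_le_bound {f w : ℝ → ℝ}
    (hb : ∀ x ∈ Set.Icc (0:ℝ) 1, ∀ y ∈ Set.Icc (0:ℝ) 1, x ≤ y → |f y - f x| ≤ w y - w x)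
    {a b : ℝ} (ha : a ∈ Set.Icc (0:ℝ) 1) (hb' : b ∈ Set.Icc (0:ℝ) 1) (hab : a ≤ b) :
    sV f a b ≤ w b - w a := by
  rw [sV, variationOnFromTo.eq_of_le _ _ hab]
  have h0 : (0:ℝ) ≤ w b - w a := (abs_nonneg _).trans (hb a ha b hb' hab)
  exact ENNReal.toReal_le_of_le_ofReal h0 (evar_le_bound hb ha hb' hab)

private lemma lbv_of_bound {f w : ℝ → ℝ}
    (hb : ∀ x ∈ Set.Icc (0:ℝ) 1, ∀ y ∈ Set.Icc (0:ℝ) 1, x ≤ y → |f y - f x| ≤ w y - w x) :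
    LocallyBoundedVariationOn f (Set.Icc (0:ℝ) 1) := by
  intro a b ha hb'
  rcases le_total a b with h | h
  · exact ((evar_le_bound hb ha hb' h).trans_lt ENNReal.ofReal_lt_top).ne
  · rcases eq_or_lt_of_le h with rfl | h'
    · exact ((evar_le_bound hb ha hb' le_rfl).trans_lt ENNReal.ofReal_lt_top).ne
    · rw [BoundedVariationOn, Set.Icc_eq_empty (not_le.2 h'), Set.inter_empty]
      rw [eVariationOn.subsingleton f Set.subsingleton_empty]
      exact ENNReal.zero_ne_top

private lemma sV_ge_sub {f : ℝ → ℝ} (hf : LocallyBoundedVariationOn f (Set.Icc (0:ℝ) 1))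
    {a b : ℝ} (ha : a ∈ Set.Icc (0:ℝ) 1) (hb : b ∈ Set.Icc (0:ℝ) 1) (hab : a ≤ b) :
    f b - f a ≤ sV f a b ∧ f a - f b ≤ sV f a b := by
  have hbv : BoundedVariationOn f (Set.Icc (0:ℝ) 1 ∩ Set.Icc a b) := hf a b ha hb
  rw [sV, variationOnFromTo.eq_of_le _ _ hab]
  exact ⟨hbv.sub_le ⟨hb, hab, le_rfl⟩ ⟨ha, le_rfl, hab⟩,
    hbv.sub_le ⟨ha, le_rfl, hab⟩ ⟨hb, hab, le_rfl⟩⟩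

private lemma sV_add {f : ℝ → ℝ} (hf : LocallyBoundedVariationOn f (Set.Icc (0:ℝ) 1))
    {a b c : ℝ} (ha : a ∈ Set.Icc (0:ℝ) 1) (hb : b ∈ Set.Icc (0:ℝ) 1)
    (hc : c ∈ Set.Icc (0:ℝ) 1) : sV f a b + sV f b c = sV f a c :=
  variationOnFromTo.add hf ha hb hc

private lemma sV_self (f : ℝ → ℝ) (a : ℝ) : sV f a a = 0 :=
  variationOnFromTo.self f _ a

private lemma sV_swap (f : ℝ → ℝ) (a b : ℝ) : sV f a b = - sV f b a :=
  variationOnFromTo.eq_neg_swap f _ a b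

private lemma sV_partition {f : ℝ → ℝ} (hf : LocallyBoundedVariationOn f (Set.Icc (0:ℝ) 1))
    {u : ℕ → ℝ} (hu : ∀ i, u i ∈ Set.Icc (0:ℝ) 1) (n : ℕ) :
    sV f (u 0) (u n) = ∑ i ∈ Finset.range n, sV f (u i) (u (i+1)) := by
  induction n with
  | zero => simp [sV_self]
  | succ n ih => rw [Finset.sum_range_succ, ← ih, sV_add hf (hu 0) (hu n) (hu (n+1))]

private lemma min_supermod {x₁ x₂ y₁ y₂ F11 F12 F21 F22 : ℝ}
    (hx : x₁ ≤ x₂) (hy : y₁ ≤ y₂)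
    (hmod : F22 + F11 = F21 + F12)
    (hax0 : F11 ≤ F21) (hax1 : F21 - F11 ≤ x₂ - x₁)
    (hay0 : F11 ≤ F12) (hay1 : F12 - F11 ≤ y₂ - y₁) :
    min x₂ (min y₁ F21) + min x₁ (min y₂ F12) ≤ min x₂ (min y₂ F22) + min x₁ (min y₁ F11) := by
  have b1 : min x₂ (min y₁ F21) ≤ x₂ := min_le_left _ _
  have b2 : min x₂ (min y₁ F21) ≤ y₁ := (min_le_right _ _).trans (min_le_left _ _)
  have b3 : min x₂ (min y₁ F21) ≤ F21 := (min_le_right _ _).trans (min_le_right _ _)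
  have c1 : min x₁ (min y₂ F12) ≤ x₁ := min_le_left _ _
  have c2 : min x₁ (min y₂ F12) ≤ y₂ := (min_le_right _ _).trans (min_le_left _ _)
  have c3 : min x₁ (min y₂ F12) ≤ F12 := (min_le_right _ _).trans (min_le_right _ _)
  rcases min_cases x₁ (min y₁ F11) with ⟨g1, _⟩ | ⟨g1, _⟩
  · rw [g1, ← sub_le_iff_le_add]
    exact le_min (by linarith) (le_min (by linarith) (by linarith))
  · rcases min_cases y₁ F11 with ⟨k1, _⟩ | ⟨k1, _⟩ <;> rw [g1, k1, ← sub_le_iff_le_add]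
    · exact le_min (by linarith) (le_min (by linarith) (by linarith))
    · exact le_min (by linarith) (le_min (by linarith) (by linarith))

private lemma min_vol_diag {s t fs ft Γs Γt vh vg F G : ℝ}
    (h1 : Γs ≤ s) (h2 : Γs ≤ fs) (h3 : Γt ≤ t) (h4 : Γt ≤ ft)
    (hΓm : Γs ≤ Γt)
    (hvh1 : (t - Γt) - (s - Γs) ≤ vh) (hvh2 : (s - Γs) - (t - Γt) ≤ vh)
    (hvg1 : (ft - Γt) - (fs - Γs) ≤ vg) (hvg2 : (fs - Γs) - (ft - Γt) ≤ vg)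
    (hF : 2*F = 2*t - (vh + (t - Γt) + (s - Γs)))
    (hG : 2*G = 2*ft - (vg + (fs - Γs) + (ft - Γt)))
    (hcond : vh ≥ (s - Γs) + (t - Γt) ∨ vg ≥ (fs - Γs) + (ft - Γt) ∨
      vh + vg ≥ (t - s) + (ft - fs)) :
    min t (min fs F) + min s (min ft G) ≤ Γt + Γs := by
  have b1 : min t (min fs F) ≤ t := min_le_left _ _
  have b2 : min t (min fs F) ≤ fs := (min_le_right _ _).trans (min_le_left _ _)
  have b3 : min t (min fs F) ≤ F := (min_le_right _ _).trans (min_le_right _ _)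
  have c1 : min s (min ft G) ≤ s := min_le_left _ _
  have c2 : min s (min ft G) ≤ ft := (min_le_right _ _).trans (min_le_left _ _)
  have c3 : min s (min ft G) ≤ G := (min_le_right _ _).trans (min_le_right _ _)
  rcases hcond with hc | hc | hc
  · linarith
  · linarith
  · rcases le_total fs F with hp | hp <;> rcases le_total s G with hq | hq
    · linarith
    · linarith
    · linarith
    · linarith

private lemma min_vol_diag_rev {s t fs ft Γs Γt vh vg F G eh eg : ℝ}
    (h3 : Γt ≤ t) (h4 : Γt ≤ ft)
    (hΓm : Γs ≤ Γt) (hΓl : Γt - Γs ≤ (t - s) + (ft - fs))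
    (hvh1 : (t - Γt) - (s - Γs) ≤ vh) (hvh2 : (s - Γs) - (t - Γt) ≤ vh)
    (hvg1 : (ft - Γt) - (fs - Γs) ≤ vg) (hvg2 : (fs - Γs) - (ft - Γt) ≤ vg)
    (hF : 2*F = 2*t - (vh + (t - Γt) + (s - Γs)))
    (hG : 2*G = 2*ft - (vg + (fs - Γs) + (ft - Γt)))
    (hNh : vh - ((t - Γt) - (s - Γs)) ≤ 2*(ft - fs))
    (hNg : vg - ((ft - Γt) - (fs - Γs)) ≤ 2*(t - s))
    (hfs : fs < ft)
    (hc3 : vh + vg < (t - s) + (ft - fs))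
    (hc4 : ft - fs < eh) (hc5 : t - s < eg)
    (hc6 : eh ≤ s - Γs) (hc7 : eg ≤ fs - Γs) :
    Γs + Γt < min t (min fs F) + min s (min ft G) := by
  rcases min_cases fs F with ⟨p1, _⟩ | ⟨p1, _⟩ <;>
    rcases min_cases ft G with ⟨q1, _⟩ | ⟨q1, _⟩ <;>
    rcases min_cases t (min fs F) with ⟨e1, e2⟩ | ⟨e1, e2⟩ <;>
    rcases min_cases s (min ft G) with ⟨f1, f2⟩ | ⟨f1, f2⟩ <;>
    rw [p1] at * <;> rw [q1] at * <;> rw [e1, f1] <;> linarith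

theorem stmt_14
    (φ Γ : ℝ → ℝ)
    (hφcont : ContinuousOn φ (Set.Icc 0 1))
    (hφmono : StrictMonoOn φ (Set.Icc 0 1))
    (hφ0 : φ 0 = 0) (hφ1 : φ 1 = 1)
    (hΓrange : ∀ t ∈ Set.Icc (0:ℝ) 1, max 0 (t + φ t - 1) ≤ Γ t ∧ Γ t ≤ min t (φ t))
    (hΓlip : ∀ t₁ t₂ : ℝ, t₁ ∈ Set.Icc (0:ℝ) 1 → t₂ ∈ Set.Icc (0:ℝ) 1 → t₁ ≤ t₂ →
      0 ≤ Γ t₂ - Γ t₁ ∧ Γ t₂ - Γ t₁ ≤ (t₂ - t₁) + (φ t₂ - φ t₁))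
    (ψ : ℝ → ℝ)
    (hψmem : ∀ y ∈ Set.Icc (0:ℝ) 1, ψ y ∈ Set.Icc (0:ℝ) 1)
    (hψφ : ∀ t ∈ Set.Icc (0:ℝ) 1, ψ (φ t) = t)
    (hφψ : ∀ y ∈ Set.Icc (0:ℝ) 1, φ (ψ y) = y) :
    IsCopula (splice φ ψ Γ) ↔
      ∀ x₁ ∈ Set.Icc (0:ℝ) 1, ∀ x₂ ∈ Set.Icc (0:ℝ) 1, x₁ < x₂ →
        (sV (Ghat Γ) x₁ x₂ ≥ Ghat Γ x₁ + Ghat Γ x₂ ∨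
         sV (Gtil φ Γ) x₁ x₂ ≥ Gtil φ Γ x₁ + Gtil φ Γ x₂ ∨
         sV (Ghat Γ) x₁ x₂ + sV (Gtil φ Γ) x₁ x₂ ≥ (x₂ - x₁) + (φ x₂ - φ x₁)) := by
  have h01 : (0:ℝ) ∈ Set.Icc (0:ℝ) 1 := by constructor <;> norm_num
  have h11 : (1:ℝ) ∈ Set.Icc (0:ℝ) 1 := by constructor <;> norm_num
  have hm : MonotoneOn φ (Set.Icc 0 1) := hφmono.monotoneOn
  have hφmem : ∀ t ∈ Set.Icc (0:ℝ) 1, φ t ∈ Set.Icc (0:ℝ) 1 := by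
    intro t ht
    constructor
    · rw [← hφ0]; exact hm h01 ht ht.1
    · rw [← hφ1]; exact hm ht h11 ht.2
  have hΓ0 : Γ 0 = 0 := by
    have h := hΓrange 0 h01
    have h2 := le_max_left (0:ℝ) (0 + φ 0 - 1)
    have h3 := min_le_left (0:ℝ) (φ 0)
    linarith [h.1, h.2]
  have hΓ1 : Γ 1 = 1 := by
    have h := hΓrange 1 h11
    have h2 := le_max_right (0:ℝ) (1 + φ 1 - 1)
    have h3 := min_le_left (1:ℝ) (φ 1)
    linarith [h.1, h.2, hφ1]
  have hΓr : ∀ t ∈ Set.Icc (0:ℝ) 1, 0 ≤ Γ t ∧ Γ t ≤ t ∧ Γ t ≤ φ t := by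
    intro t ht
    obtain ⟨r1, r2⟩ := hΓrange t ht
    exact ⟨le_trans (le_max_left _ _) r1, le_trans r2 (min_le_left _ _),
      le_trans r2 (min_le_right _ _)⟩
  have hΓm : ∀ a ∈ Set.Icc (0:ℝ) 1, ∀ b ∈ Set.Icc (0:ℝ) 1, a ≤ b → Γ a ≤ Γ b := by
    intro a ha b hb hab
    linarith [(hΓlip a b ha hb hab).1]
  have hψ0 : ψ 0 = 0 := by have := hψφ 0 h01; rwa [hφ0] at this
  have hψ1 : ψ 1 = 1 := by have := hψφ 1 h11; rwa [hφ1] at this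
  have hψle : ∀ y ∈ Set.Icc (0:ℝ) 1, ∀ x ∈ Set.Icc (0:ℝ) 1, y ≤ φ x → ψ y ≤ x := by
    intro y hy x hx hyx
    by_contra hc
    push_neg at hc
    have := hφmono hx (hψmem y hy) hc
    rw [hφψ y hy] at this; linarith
  have hψge : ∀ y ∈ Set.Icc (0:ℝ) 1, ∀ x ∈ Set.Icc (0:ℝ) 1, φ x ≤ y → x ≤ ψ y := by
    intro y hy x hx hyx
    by_contra hc
    push_neg at hc
    have := hφmono (hψmem y hy) hx hc
    rw [hφψ y hy] at this; linarith
  have bH1 : ∀ x ∈ Set.Icc (0:ℝ) 1, ∀ y ∈ Set.Icc (0:ℝ) 1, x ≤ y →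
      |Ghat Γ y - Ghat Γ x| ≤ (fun t => t + Γ t) y - (fun t => t + Γ t) x := by
    intro a ha b hb hab
    obtain ⟨l1, l2⟩ := hΓlip a b ha hb hab
    simp only [Ghat]
    rw [abs_le]
    constructor <;> linarith
  have bH2 : ∀ x ∈ Set.Icc (0:ℝ) 1, ∀ y ∈ Set.Icc (0:ℝ) 1, x ≤ y →
      |Ghat Γ y - Ghat Γ x| ≤ (fun t => Ghat Γ t + 2*φ t) y - (fun t => Ghat Γ t + 2*φ t) x := by
    intro a ha b hb hab
    obtain ⟨l1, l2⟩ := hΓlip a b ha hb hab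
    have hφab : φ a ≤ φ b := hm ha hb hab
    simp only [Ghat]
    rw [abs_le]
    constructor <;> linarith
  have bG1 : ∀ x ∈ Set.Icc (0:ℝ) 1, ∀ y ∈ Set.Icc (0:ℝ) 1, x ≤ y →
      |Gtil φ Γ y - Gtil φ Γ x| ≤ (fun t => φ t + Γ t) y - (fun t => φ t + Γ t) x := by
    intro a ha b hb hab
    obtain ⟨l1, l2⟩ := hΓlip a b ha hb hab
    have hφab : φ a ≤ φ b := hm ha hb hab
    simp only [Gtil]
    rw [abs_le]
    constructor <;> linarith
  have bG2 : ∀ x ∈ Set.Icc (0:ℝ) 1, ∀ y ∈ Set.Icc (0:ℝ) 1, x ≤ y →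
      |Gtil φ Γ y - Gtil φ Γ x| ≤ (fun t => Gtil φ Γ t + 2*t) y - (fun t => Gtil φ Γ t + 2*t) x := by
    intro a ha b hb hab
    obtain ⟨l1, l2⟩ := hΓlip a b ha hb hab
    simp only [Gtil]
    rw [abs_le]
    constructor <;> linarith
  have hlbvH : LocallyBoundedVariationOn (Ghat Γ) (Set.Icc (0:ℝ) 1) := lbv_of_bound bH1
  have hlbvG : LocallyBoundedVariationOn (Gtil φ Γ) (Set.Icc (0:ℝ) 1) := lbv_of_bound bG1
  have HH1 : ∀ a ∈ Set.Icc (0:ℝ) 1, ∀ b ∈ Set.Icc (0:ℝ) 1, a ≤ b →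
      sV (Ghat Γ) a b ≤ (b - a) + (Γ b - Γ a) := by
    intro a ha b hb hab
    have := sV_le_bound bH1 ha hb hab
    linarith
  have HH2 : ∀ a ∈ Set.Icc (0:ℝ) 1, ∀ b ∈ Set.Icc (0:ℝ) 1, a ≤ b →
      sV (Ghat Γ) a b ≤ (Ghat Γ b - Ghat Γ a) + 2*(φ b - φ a) := by
    intro a ha b hb hab
    have := sV_le_bound bH2 ha hb hab
    linarith
  have HG1 : ∀ a ∈ Set.Icc (0:ℝ) 1, ∀ b ∈ Set.Icc (0:ℝ) 1, a ≤ b →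
      sV (Gtil φ Γ) a b ≤ (φ b - φ a) + (Γ b - Γ a) := by
    intro a ha b hb hab
    have := sV_le_bound bG1 ha hb hab
    linarith
  have HG2 : ∀ a ∈ Set.Icc (0:ℝ) 1, ∀ b ∈ Set.Icc (0:ℝ) 1, a ≤ b →
      sV (Gtil φ Γ) a b ≤ (Gtil φ Γ b - Gtil φ Γ a) + 2*(b - a) := by
    intro a ha b hb hab
    have := sV_le_bound bG2 ha hb hab
    linarith
  have HHs := fun {a} ha {b} hb hab => sV_ge_sub hlbvH (a := a) (b := b) ha hb hab
  have HGs := fun {a} ha {b} hb hab => sV_ge_sub hlbvG (a := a) (b := b) ha hb hab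
  have cornerBelow : ∀ x ∈ Set.Icc (0:ℝ) 1, ∀ a ∈ Set.Icc (0:ℝ) 1, a ≤ x →
      splice φ ψ Γ x (φ a) = min x (min (φ a)
        (x - (1/2) * (sV (Ghat Γ) a x + Ghat Γ x + Ghat Γ a))) := by
    intro x hx a ha hax
    rw [splice, if_pos (hm ha hx hax)]
    simp only [C1, f1, hψφ a ha]
  have cornerAbove : ∀ x ∈ Set.Icc (0:ℝ) 1, ∀ a ∈ Set.Icc (0:ℝ) 1, x ≤ a →
      splice φ ψ Γ x (φ a) = min x (min (φ a)
        (φ a - (1/2) * (sV (Gtil φ Γ) x a + Gtil φ Γ x + Gtil φ Γ a))) := by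
    intro x hx a ha hxa
    rcases eq_or_lt_of_le hxa with rfl | hlt
    · rw [splice, if_pos le_rfl]
      simp only [C1, f1, hψφ x hx]
      rw [sV_self, sV_self]
      have e : x - 1/2 * (0 + Ghat Γ x + Ghat Γ x)
          = φ x - 1/2 * (0 + Gtil φ Γ x + Gtil φ Γ x) := by
        simp only [Ghat, Gtil]; ring
      rw [e]
    · rw [splice, if_neg (not_le.2 (hφmono hx ha hlt))]
      simp only [C2, f2, hψφ a ha]
  have cornerDiag : ∀ x ∈ Set.Icc (0:ℝ) 1, splice φ ψ Γ x (φ x) = Γ x := by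
    intro x hx
    rw [cornerBelow x hx x hx le_rfl, sV_self]
    have e : x - (1/2) * (0 + Ghat Γ x + Ghat Γ x) = Γ x := by simp only [Ghat]; ring
    rw [e, min_eq_right (hΓr x hx).2.2, min_eq_right (hΓr x hx).2.1]
  have eGh : ∀ r : ℝ, Ghat Γ r = r - Γ r := fun r => rfl
  have eGt : ∀ r : ℝ, Gtil φ Γ r = φ r - Γ r := fun r => rfl
  have haveBelow : ∀ a1 ∈ Set.Icc (0:ℝ) 1, ∀ a2 ∈ Set.Icc (0:ℝ) 1,
      ∀ x1 ∈ Set.Icc (0:ℝ) 1, ∀ x2 ∈ Set.Icc (0:ℝ) 1, a1 ≤ a2 → a2 ≤ x1 → x1 ≤ x2 →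
      splice φ ψ Γ x2 (φ a1) + splice φ ψ Γ x1 (φ a2) ≤
        splice φ ψ Γ x2 (φ a2) + splice φ ψ Γ x1 (φ a1) := by
    intro a1 ha1 a2 ha2 x1 hx1 x2 hx2 ha12 hax hx12
    have h1x2 : a1 ≤ x2 := le_trans ha12 (le_trans hax hx12)
    have h2x2 : a2 ≤ x2 := le_trans hax hx12
    have h1x1 : a1 ≤ x1 := le_trans ha12 hax
    rw [cornerBelow x2 hx2 a1 ha1 h1x2, cornerBelow x1 hx1 a2 ha2 hax,
      cornerBelow x2 hx2 a2 ha2 h2x2, cornerBelow x1 hx1 a1 ha1 h1x1]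
    have add1 : sV (Ghat Γ) a1 a2 + sV (Ghat Γ) a2 x1 = sV (Ghat Γ) a1 x1 :=
      sV_add hlbvH ha1 ha2 hx1
    have add2 : sV (Ghat Γ) a1 x1 + sV (Ghat Γ) x1 x2 = sV (Ghat Γ) a1 x2 :=
      sV_add hlbvH ha1 hx1 hx2
    have add3 : sV (Ghat Γ) a2 x1 + sV (Ghat Γ) x1 x2 = sV (Ghat Γ) a2 x2 :=
      sV_add hlbvH ha2 hx1 hx2
    have i1 := HH1 x1 hx1 x2 hx2 hx12
    have i2 := (HHs hx1 hx2 hx12).2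
    have i3 := (HHs ha1 ha2 ha12).1
    have i4 := HH2 a1 ha1 a2 ha2 ha12
    refine min_supermod hx12 (hm ha1 ha2 ha12) ?_ ?_ ?_ ?_ ?_ <;>
      linarith [eGh a1, eGh a2, eGh x1, eGh x2]
  have haveAbove : ∀ x1 ∈ Set.Icc (0:ℝ) 1, ∀ x2 ∈ Set.Icc (0:ℝ) 1,
      ∀ a1 ∈ Set.Icc (0:ℝ) 1, ∀ a2 ∈ Set.Icc (0:ℝ) 1, x1 ≤ x2 → x2 ≤ a1 → a1 ≤ a2 →
      splice φ ψ Γ x2 (φ a1) + splice φ ψ Γ x1 (φ a2) ≤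
        splice φ ψ Γ x2 (φ a2) + splice φ ψ Γ x1 (φ a1) := by
    intro x1 hx1 x2 hx2 a1 ha1 a2 ha2 hx12 hxa ha12
    have hx1a1 : x1 ≤ a1 := le_trans hx12 hxa
    have hx1a2 : x1 ≤ a2 := le_trans hx1a1 ha12
    have hx2a2 : x2 ≤ a2 := le_trans hxa ha12
    rw [cornerAbove x2 hx2 a1 ha1 hxa, cornerAbove x1 hx1 a2 ha2 hx1a2,
      cornerAbove x2 hx2 a2 ha2 hx2a2, cornerAbove x1 hx1 a1 ha1 hx1a1]
    have add1 : sV (Gtil φ Γ) x1 x2 + sV (Gtil φ Γ) x2 a1 = sV (Gtil φ Γ) x1 a1 :=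
      sV_add hlbvG hx1 hx2 ha1
    have add2 : sV (Gtil φ Γ) x1 a1 + sV (Gtil φ Γ) a1 a2 = sV (Gtil φ Γ) x1 a2 :=
      sV_add hlbvG hx1 ha1 ha2
    have add3 : sV (Gtil φ Γ) x2 a1 + sV (Gtil φ Γ) a1 a2 = sV (Gtil φ Γ) x2 a2 :=
      sV_add hlbvG hx2 ha1 ha2
    have i1 := HG1 a1 ha1 a2 ha2 ha12
    have i2 := (HGs ha1 ha2 ha12).2
    have i3 := (HGs hx1 hx2 hx12).1
    have i4 := HG2 x1 hx1 x2 hx2 hx12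
    refine min_supermod hx12 (hm ha1 ha2 ha12) ?_ ?_ ?_ ?_ ?_ <;>
      linarith [eGt a1, eGt a2, eGt x1, eGt x2]
  constructor
  · -- forward direction
    intro hcop x₁ hx₁ x₂ hx₂ hlt
    by_contra hcon
    push_neg at hcon
    obtain ⟨hn1, hn2, hn3⟩ := hcon
    have hx12 : x₁ ≤ x₂ := hlt.le
    set eh : ℝ := Ghat Γ x₁ - (sV (Ghat Γ) x₁ x₂ - Ghat Γ x₂ + Ghat Γ x₁)/2 with heh
    set eg : ℝ := Gtil φ Γ x₁ - (sV (Gtil φ Γ) x₁ x₂ - Gtil φ Γ x₂ + Gtil φ Γ x₁)/2 with hegd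
    have hehpos : 0 < eh := by rw [heh]; linarith
    have hegpos : 0 < eg := by rw [hegd]; linarith
    have hunif : UniformContinuousOn φ (Set.Icc 0 1) :=
      isCompact_Icc.uniformContinuousOn_of_continuous hφcont
    rw [Metric.uniformContinuousOn_iff] at hunif
    obtain ⟨δ, hδpos, hδ⟩ := hunif eh hehpos
    have hcpos : 0 < min δ eg := lt_min hδpos hegpos
    obtain ⟨n, hn⟩ := exists_nat_gt ((x₂ - x₁) / min δ eg)
    have hnpos : 0 < (n:ℝ) := lt_trans (div_pos (by linarith) hcpos) hn
    have hn0 : (n:ℝ) ≠ 0 := ne_of_gt hnpos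
    have hsteppos : 0 < (x₂ - x₁)/(n:ℝ) := div_pos (by linarith) hnpos
    have hstepc : (x₂ - x₁)/(n:ℝ) < min δ eg := by
      rw [div_lt_iff₀ hnpos]
      have := (div_lt_iff₀ hcpos).1 hn
      linarith [mul_comm (min δ eg) (n:ℝ)]
    obtain ⟨u, hudef⟩ : ∃ u : ℕ → ℝ, ∀ i,
        u i = x₁ + ((min i n : ℕ) : ℝ) * ((x₂ - x₁)/(n:ℝ)) :=
      ⟨fun i => x₁ + ((min i n : ℕ) : ℝ) * ((x₂ - x₁)/(n:ℝ)), fun i => rfl⟩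
    have humem2 : ∀ i, u i ∈ Set.Icc x₁ x₂ := by
      intro i
      constructor
      · have : (0:ℝ) ≤ ((min i n : ℕ) : ℝ) * ((x₂ - x₁)/(n:ℝ)) :=
          mul_nonneg (Nat.cast_nonneg _) hsteppos.le
        rw [hudef i]; linarith
      · have h1 : ((min i n : ℕ) : ℝ) ≤ (n:ℝ) := Nat.cast_le.2 (min_le_right i n)
        have h2 : ((min i n : ℕ) : ℝ) * ((x₂ - x₁)/(n:ℝ)) ≤ (n:ℝ) * ((x₂ - x₁)/(n:ℝ)) :=
          mul_le_mul_of_nonneg_right h1 hsteppos.le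
        have h3 : (n:ℝ) * ((x₂ - x₁)/(n:ℝ)) = x₂ - x₁ := by field_simp
        rw [hudef i]; linarith
    have humem : ∀ i, u i ∈ Set.Icc (0:ℝ) 1 :=
      fun i => ⟨le_trans hx₁.1 (humem2 i).1, le_trans (humem2 i).2 hx₂.2⟩
    have hu0 : u 0 = x₁ := by rw [hudef 0]; simp
    have hun : u n = x₂ := by
      rw [hudef n]
      simp only [min_self]
      field_simp
      ring
    have hsumh : sV (Ghat Γ) x₁ x₂ = ∑ i ∈ Finset.range n, sV (Ghat Γ) (u i) (u (i+1)) := by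
      have := sV_partition hlbvH humem n
      rwa [hu0, hun] at this
    have hsumg : sV (Gtil φ Γ) x₁ x₂ = ∑ i ∈ Finset.range n, sV (Gtil φ Γ) (u i) (u (i+1)) := by
      have := sV_partition hlbvG humem n
      rwa [hu0, hun] at this
    have hsumt : ∑ i ∈ Finset.range n, ((u (i+1) - u i) + (φ (u (i+1)) - φ (u i)))
        = (x₂ - x₁) + (φ x₂ - φ x₁) := by
      rw [Finset.sum_add_distrib, Finset.sum_range_sub (fun i => u i),
        Finset.sum_range_sub (fun i => φ (u i)), hu0, hun]
    have htot : ∑ i ∈ Finset.range n,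
        (sV (Ghat Γ) (u i) (u (i+1)) + sV (Gtil φ Γ) (u i) (u (i+1)))
        < ∑ i ∈ Finset.range n, ((u (i+1) - u i) + (φ (u (i+1)) - φ (u i))) := by
      rw [Finset.sum_add_distrib, hsumt, ← hsumh, ← hsumg]
      exact hn3
    obtain ⟨i, hi, hkey⟩ := Finset.exists_lt_of_sum_lt htot
    have hil : i < n := Finset.mem_range.1 hi
    have hts : u (i+1) - u i = (x₂ - x₁)/(n:ℝ) := by
      have e1 : min i n = i := min_eq_left hil.le
      have e2 : min (i+1) n = i+1 := min_eq_left (Nat.succ_le_of_lt hil)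
      rw [hudef i, hudef (i+1), e1, e2]
      push_cast
      ring
    have hstlt : u i < u (i+1) := by linarith
    have hsI := humem i
    have htI := humem (i+1)
    have hdist : dist (u i) (u (i+1)) < δ := by
      rw [Real.dist_eq, abs_of_neg (by linarith : u i - u (i+1) < 0)]
      have := min_le_left δ eg
      linarith
    have hφd := hδ (u i) hsI (u (i+1)) htI hdist
    have hφmono_st : φ (u i) < φ (u (i+1)) := hφmono hsI htI hstlt
    have hφst : φ (u (i+1)) - φ (u i) < eh := by
      rw [Real.dist_eq, abs_of_neg (by linarith : φ (u i) - φ (u (i+1)) < 0)] at hφd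
      linarith
    have htse : u (i+1) - u i < eg := by
      have := min_le_right δ eg
      linarith
    have hx1s : x₁ ≤ u i := (humem2 i).1
    have hsx2 : u i ≤ x₂ := (humem2 i).2
    have hhs : eh ≤ Ghat Γ (u i) := by
      have a1 : sV (Ghat Γ) x₁ (u i) + sV (Ghat Γ) (u i) x₂ = sV (Ghat Γ) x₁ x₂ :=
        sV_add hlbvH hx₁ hsI hx₂
      have a2 := (HHs hx₁ hsI hx1s).2
      have a3 := (HHs hsI hx₂ hsx2).1
      rw [heh]; linarith
    have hgs : eg ≤ Gtil φ Γ (u i) := by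
      have a1 : sV (Gtil φ Γ) x₁ (u i) + sV (Gtil φ Γ) (u i) x₂ = sV (Gtil φ Γ) x₁ x₂ :=
        sV_add hlbvG hx₁ hsI hx₂
      have a2 := (HGs hx₁ hsI hx1s).2
      have a3 := (HGs hsI hx₂ hsx2).1
      rw [hegd]; linarith
    have hvol := hcop.2.2 (u i) (u (i+1)) (φ (u i)) (φ (u (i+1))) hsI htI
      (hφmem _ hsI) (hφmem _ htI) hstlt.le (hm hsI htI hstlt.le)
    rw [cornerDiag (u (i+1)) htI, cornerDiag (u i) hsI,
      cornerBelow (u (i+1)) htI (u i) hsI hstlt.le,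
      cornerAbove (u i) hsI (u (i+1)) htI hstlt.le] at hvol
    have key : Γ (u i) + Γ (u (i+1)) <
        min (u (i+1)) (min (φ (u i))
          (u (i+1) - (1/2) * (sV (Ghat Γ) (u i) (u (i+1)) + Ghat Γ (u (i+1)) + Ghat Γ (u i))))
        + min (u i) (min (φ (u (i+1)))
          (φ (u (i+1)) - (1/2) * (sV (Gtil φ Γ) (u i) (u (i+1)) + Gtil φ Γ (u i) + Gtil φ Γ (u (i+1))))) := by
      refine min_vol_diag_rev (hΓr _ htI).2.1 (hΓr _ htI).2.2
        (hΓm _ hsI _ htI hstlt.le) (hΓlip _ _ hsI htI hstlt.le).2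
        ?_ ?_ ?_ ?_ ?_ ?_ ?_ ?_ hφmono_st hkey hφst htse ?_ ?_
      · linarith [(HHs hsI htI hstlt.le).1, eGh (u i), eGh (u (i+1))]
      · linarith [(HHs hsI htI hstlt.le).2, eGh (u i), eGh (u (i+1))]
      · linarith [(HGs hsI htI hstlt.le).1, eGt (u i), eGt (u (i+1))]
      · linarith [(HGs hsI htI hstlt.le).2, eGt (u i), eGt (u (i+1))]
      · simp only [Ghat]; ring
      · simp only [Gtil]; ring
      · linarith [HH2 _ hsI _ htI hstlt.le, eGh (u i), eGh (u (i+1))]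
      · linarith [HG2 _ hsI _ htI hstlt.le, eGt (u i), eGt (u (i+1))]
      · linarith [eGh (u i)]
      · linarith [eGt (u i)]
    linarith [hvol, key]
  · -- backward direction
    intro Hcond
    have haveDiag : ∀ s ∈ Set.Icc (0:ℝ) 1, ∀ t ∈ Set.Icc (0:ℝ) 1, s ≤ t →
        splice φ ψ Γ t (φ s) + splice φ ψ Γ s (φ t) ≤
          splice φ ψ Γ t (φ t) + splice φ ψ Γ s (φ s) := by
      intro s hs t ht hst
      rcases eq_or_lt_of_le hst with rfl | hlt
      · linarith
      rw [cornerDiag t ht, cornerDiag s hs, cornerBelow t ht s hs hst,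
        cornerAbove s hs t ht hst]
      refine min_vol_diag (vh := sV (Ghat Γ) s t) (vg := sV (Gtil φ Γ) s t)
        (Γs := Γ s) (Γt := Γ t) ?_ ?_ ?_ ?_ ?_ ?_ ?_ ?_ ?_ ?_ ?_ ?_
      · exact (hΓr s hs).2.1
      · exact (hΓr s hs).2.2
      · exact (hΓr t ht).2.1
      · exact (hΓr t ht).2.2
      · exact hΓm s hs t ht hst
      · linarith [(HHs hs ht hst).1, eGh s, eGh t]
      · linarith [(HHs hs ht hst).2, eGh s, eGh t]
      · linarith [(HGs hs ht hst).1, eGt s, eGt t]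
      · linarith [(HGs hs ht hst).2, eGt s, eGt t]
      · simp only [Ghat]; ring
      · simp only [Gtil]; ring
      · rcases Hcond s hs t ht hlt with c | c | c
        · left; rw [ge_iff_le] at c ⊢; linarith [eGh s, eGh t]
        · right; left; rw [ge_iff_le] at c ⊢; linarith [eGt s, eGt t]
        · right; right; rw [ge_iff_le] at c ⊢; linarith
    have Hstraddle : ∀ a1 ∈ Set.Icc (0:ℝ) 1, ∀ a2 ∈ Set.Icc (0:ℝ) 1,
        ∀ x1 ∈ Set.Icc (0:ℝ) 1, ∀ x2 ∈ Set.Icc (0:ℝ) 1,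
        a1 ≤ x1 → x1 ≤ x2 → x2 ≤ a2 →
        splice φ ψ Γ x2 (φ a1) + splice φ ψ Γ x1 (φ a2) ≤
          splice φ ψ Γ x2 (φ a2) + splice φ ψ Γ x1 (φ a1) := by
      intro a1 ha1 a2 ha2 x1 hx1 x2 hx2 h1 h2 h3
      have p1 := haveBelow a1 ha1 x1 hx1 x1 hx1 x2 hx2 h1 le_rfl h2
      have p2 := haveDiag x1 hx1 x2 hx2 h2
      have p3 := haveAbove x1 hx1 x2 hx2 x2 hx2 a2 ha2 h2 le_rfl h3
      linarith
    have Hvol : ∀ x1 ∈ Set.Icc (0:ℝ) 1, ∀ x2 ∈ Set.Icc (0:ℝ) 1,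
        ∀ a1 ∈ Set.Icc (0:ℝ) 1, ∀ a2 ∈ Set.Icc (0:ℝ) 1, x1 ≤ x2 → a1 ≤ a2 →
        splice φ ψ Γ x2 (φ a1) + splice φ ψ Γ x1 (φ a2) ≤
          splice φ ψ Γ x2 (φ a2) + splice φ ψ Γ x1 (φ a1) := by
      intro x1 hx1 x2 hx2 a1 ha1 a2 ha2 hx12 ha12
      rcases le_total a2 x1 with hc | hc
      · exact haveBelow a1 ha1 a2 ha2 x1 hx1 x2 hx2 ha12 hc hx12
      rcases le_total x2 a1 with hd | hd
      · exact haveAbove x1 hx1 x2 hx2 a1 ha1 a2 ha2 hx12 hd ha12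
      rcases le_total a1 x1 with h1 | h1 <;> rcases le_total x2 a2 with h2 | h2
      · exact Hstraddle a1 ha1 a2 ha2 x1 hx1 x2 hx2 h1 hx12 h2
      · have p1 := Hstraddle a1 ha1 a2 ha2 x1 hx1 a2 ha2 h1 hc le_rfl
        have p2 := haveBelow a1 ha1 a2 ha2 a2 ha2 x2 hx2 ha12 le_rfl h2
        linarith
      · have p1 := haveAbove x1 hx1 a1 ha1 a1 ha1 a2 ha2 h1 le_rfl ha12
        have p2 := Hstraddle a1 ha1 a2 ha2 a1 ha1 x2 hx2 le_rfl hd h2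
        linarith
      · have p1 := haveAbove x1 hx1 a1 ha1 a1 ha1 a2 ha2 h1 le_rfl ha12
        have p2 := Hstraddle a1 ha1 a2 ha2 a1 ha1 a2 ha2 le_rfl ha12 le_rfl
        have p3 := haveBelow a1 ha1 a2 ha2 a2 ha2 x2 hx2 ha12 le_rfl h2
        linarith
    refine ⟨?_, ?_, ?_⟩
    · -- range
      intro x hx y hy
      rw [splice]
      split_ifs with hyx
      · have haI := hψmem y hy
        have hax : ψ y ≤ x := hψle y hy x hx hyx
        have hf1 : 0 ≤ f1 ψ Γ x y := by
          have hb := HH1 (ψ y) haI x hx hax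
          simp only [f1]
          linarith [eGh x, eGh (ψ y), (hΓr (ψ y) haI).1]
        constructor
        · simp only [C1, le_min_iff]
          exact ⟨hx.1, hy.1, hf1⟩
        · simp only [C1]
          exact le_trans (min_le_left _ _) hx.2
      · push_neg at hyx
        have haI := hψmem y hy
        have hax : x ≤ ψ y := hψge y hy x hx hyx.le
        have hf2 : 0 ≤ f2 φ ψ Γ x y := by
          have hb := HG1 x hx (ψ y) haI hax
          simp only [f2]
          linarith [eGt x, eGt (ψ y), (hΓr x hx).1, hφψ y hy]
        constructor
        · simp only [C2, le_min_iff]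
          exact ⟨hx.1, hy.1, hf2⟩
        · simp only [C2]
          exact le_trans (min_le_left _ _) hx.2
    · -- boundary
      intro x hx
      have hφx0 : (0:ℝ) ≤ φ x := by rw [← hφ0]; exact hm h01 hx hx.1
      refine ⟨?_, ?_, ?_, ?_⟩
      · rw [splice, if_pos hφx0]
        simp only [C1, f1, hψ0]
        have h0' : Ghat Γ 0 = 0 := by simp [Ghat, hΓ0]
        rw [h0']
        have hf : 0 ≤ x - 1/2 * (sV (Ghat Γ) 0 x + Ghat Γ x + 0) := by
          have := HH1 0 h01 x hx hx.1
          linarith [eGh x, hΓ0]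
        rw [min_eq_left hf, min_eq_right hx.1]
      · rw [splice]
        split_ifs with hx0
        · have hx0' : x = 0 := le_antisymm (by rwa [hφ0] at hx0) hx.1
          subst hx0'
          simp only [C1, f1, hψ0, sV_self]
          have h0' : Ghat Γ 0 = 0 := by simp [Ghat, hΓ0]
          rw [h0']
          norm_num
        · simp only [C2, f2]
          have haI := hψmem x hx
          have hf : 0 ≤ x - 1/2 * (sV (Gtil φ Γ) 0 (ψ x) + Gtil φ Γ 0 + Gtil φ Γ (ψ x)) := by
            have := HG1 0 h01 (ψ x) haI haI.1
            linarith [eGt 0, eGt (ψ x), hφψ x hx, hΓ0, hφ0, (hΓr (ψ x) haI).1]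
          rw [min_eq_left (le_min hx.1 hf)]
      · rw [splice]
        split_ifs with h1x
        · simp only [C1, f1, hψ1]
          have e1 : Ghat Γ 1 = 0 := by simp [Ghat, hΓ1]
          rw [e1, sV_swap (Ghat Γ) 1 x]
          have hfx : x ≤ x - 1/2 * (-sV (Ghat Γ) x 1 + Ghat Γ x + 0) := by
            have := (HHs hx h11 hx.2).2
            linarith [e1]
          rw [min_eq_left (le_min hx.2 hfx)]
        · simp only [C2, f2, hψ1]
          have e1 : Gtil φ Γ 1 = 0 := by simp [Gtil, hΓ1, hφ1]
          have hfx : x ≤ 1 - 1/2 * (sV (Gtil φ Γ) x 1 + Gtil φ Γ x + Gtil φ Γ 1) := by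
            have := HG2 x hx 1 h11 hx.2
            linarith [e1, eGt x]
          rw [min_eq_left (le_min hx.2 hfx)]
      · rw [splice, if_pos (show x ≤ φ 1 by rw [hφ1]; exact hx.2)]
        simp only [C1, f1]
        have haI := hψmem x hx
        have e1 : Ghat Γ 1 = 0 := by simp [Ghat, hΓ1]
        have hfx : x ≤ 1 - 1/2 * (sV (Ghat Γ) (ψ x) 1 + Ghat Γ 1 + Ghat Γ (ψ x)) := by
          have := HH2 (ψ x) haI 1 h11 haI.2
          linarith [hφψ x hx, hφ1, e1]
        rw [min_eq_left hfx, min_eq_right hx.2]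
    · -- 2-increasing
      intro x1 x2 y1 y2 hx1 hx2 hy1 hy2 hx12 hy12
      have ha1 := hψmem y1 hy1
      have ha2 := hψmem y2 hy2
      have ha12 : ψ y1 ≤ ψ y2 := hψle y1 hy1 (ψ y2) ha2 (by rw [hφψ y2 hy2]; exact hy12)
      have e1 : y1 = φ (ψ y1) := (hφψ y1 hy1).symm
      have e2 : y2 = φ (ψ y2) := (hφψ y2 hy2).symm
      rw [e1, e2]
      linarith [Hvol x1 hx1 x2 hx2 (ψ y1) ha1 (ψ y2) ha2 hx12 ha12]
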